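/- Drift coefficient asymptotics for the rescaled logistic branching process. Under the standing assumptions, for every compact set K ⊆ ℝ, writing x̂ := μ_N + x σ_N, one has lim_{N→∞} sup_{x ∈ E_N ∩ K, x̂ ≥ 1} | (1/σ_N) ( π̄ h_N(x̂) x̂ − ρ_N^{−1} (d_N x̂ + c_N x̂ (x̂ − 1)) ) + π̄ x | = 0; that is, the normalised mean jump rate of the time-rescaled, centred and normalised logistic branching process converges to the Ornstein–Uhlenbeck drift −π̄ x, uniformly on compact sets intersected with the lattice E_N. -/

import Mathlib

open Filter

set_option maxHeartbeats 1000000 in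
private lemma drift_id_aux (s cN rN dN hk kk : ℝ) (hs : s ≠ 0) (hr : rN ≠ 0) :
    (1 / s) * ((s * s * cN / rN) * hk * kk - rN⁻¹ * (dN * kk + cN * kk * (kk - 1)))
        + (s * s * cN / rN) * ((kk - s * s) / s)
      = (s * s * cN / rN) * (hk - 1) * kk / s + (s * s * cN / rN) / s
          - ((kk - s * s) / s) ^ 2 * (s * (cN / rN)) + ((kk - s * s) / s) * (cN / rN)
          - (dN / rN) * (s + (kk - s * s) / s) := by
  field_simp
  ring

set_option maxHeartbeats 1000000 in
/-- Drift coefficient asymptotics for the rescaled logistic branching process: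
the normalised mean jump rate converges to the Ornstein–Uhlenbeck drift `-π̄ x`,
uniformly on compact sets intersected with the lattice `E_N` (states `x̂ ≥ 1`). -/
theorem logistic_drift_asymptotics
    (π : ℕ → ℝ) (hπ0 : π 0 = 0) (hπnn : ∀ j, 0 ≤ π j) (hπsum : ∑' j : ℕ, π j = 1)
    (πbar v2 : ℝ)
    (hmean : HasSum (fun j : ℕ => (j : ℝ) * π j) πbar)
    (hsecond : HasSum (fun j : ℕ => (j : ℝ) ^ 2 * π j) v2)
    (hthird : Summable (fun j : ℕ => (j : ℝ) ^ 3 * π j))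
    (ρ d c : ℕ → ℝ) (h : ℕ → ℕ → ℝ)
    (hρ : ∀ N, 0 < ρ N) (hd : ∀ N, 0 ≤ d N) (hc : ∀ N, 0 < c N)
    (hhpos : ∀ N k, 0 < h N k) (hhbdd : ∀ N, ∃ M : ℝ, ∀ k, h N k ≤ M)
    (μ σ : ℕ → ℝ)
    (hμ : ∀ N, μ N = πbar * ρ N / c N) (hσ : ∀ N, σ N = Real.sqrt (μ N))
    (hρ0 : Tendsto ρ atTop (nhds 0))
    (hρc : Tendsto (fun N => ρ N / c N) atTop atTop)
    (hdc : Tendsto (fun N => d N / c N) atTop (nhds 0))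
    (hh : ∃ C : ℝ, ∃ ε : ℕ → ℝ, Tendsto ε atTop (nhds 0) ∧
      ∀ N k, |h N k - 1| ≤ C * ε N * |(k : ℝ) - μ N| / μ N)
    (K : Set ℝ) (hK : IsCompact K) :
    Tendsto (fun N : ℕ =>
      sSup ((fun k : ℕ =>
        |(1 / σ N) * (πbar * h N k * (k : ℝ)
            - (ρ N)⁻¹ * (d N * (k : ℝ) + c N * (k : ℝ) * ((k : ℝ) - 1)))
          + πbar * (((k : ℝ) - μ N) / σ N)|)
        '' {k : ℕ | 1 ≤ k ∧ ((k : ℝ) - μ N) / σ N ∈ K}))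
      atTop (nhds 0) := by
  obtain ⟨C, ε, hε, hεbd⟩ := hh
  -- πbar ≥ 1
  have hπsummable : Summable π := by
    by_contra hs
    rw [tsum_eq_zero_of_not_summable hs] at hπsum
    norm_num at hπsum
  have hπ1 : (1 : ℝ) ≤ πbar := by
    calc (1 : ℝ) = ∑' j : ℕ, π j := hπsum.symm
      _ ≤ ∑' j : ℕ, (j : ℝ) * π j := by
          refine Summable.tsum_le_tsum (fun j => ?_) hπsummable hmean.summable
          rcases j with _ | m
          · simp [hπ0]
          · have h1 : (1 : ℝ) ≤ ((m + 1 : ℕ) : ℝ) := by exact_mod_cast Nat.one_le_iff_ne_zero.mpr (Nat.succ_ne_zero m)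
            nlinarith [hπnn (m + 1)]
      _ = πbar := hmean.tsum_eq
  have hπpos : (0 : ℝ) < πbar := by linarith
  have hm : ∀ N, 0 < μ N := fun N => by
    rw [hμ]; exact div_pos (mul_pos hπpos (hρ N)) (hc N)
  have hs : ∀ N, 0 < σ N := fun N => by
    rw [hσ]; exact Real.sqrt_pos.mpr (hm N)
  have hss : ∀ N, σ N * σ N = μ N := fun N => by
    rw [hσ]; exact Real.mul_self_sqrt (hm N).le
  -- radius of K
  obtain ⟨r, hr⟩ := hK.isBounded.subset_closedBall 0
  set R : ℝ := |r| + 1 with hRdef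
  have hR0 : (0 : ℝ) ≤ R := by rw [hRdef]; positivity
  have hRK : ∀ x ∈ K, |x| ≤ R := by
    intro x hx
    have := hr hx
    rw [Metric.mem_closedBall, Real.dist_eq, sub_zero] at this
    calc |x| ≤ r := this
      _ ≤ |r| := le_abs_self r
      _ ≤ R := by rw [hRdef]; linarith
  -- the dominating sequence
  set B : ℕ → ℝ := fun N =>
    πbar * (|C| * |ε N|) * (R + R ^ 2 * (1 / σ N)) + πbar * (1 / σ N)
      + R ^ 2 * (σ N * (c N / ρ N)) + R * (c N / ρ N)
      + (d N / c N) * (σ N * (c N / ρ N) + R * (c N / ρ N)) with hBdef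
  have hBnn : ∀ N, 0 ≤ B N := by
    intro N
    have h1 : 0 ≤ c N / ρ N := div_nonneg (hc N).le (hρ N).le
    have h2 : 0 ≤ 1 / σ N := div_nonneg zero_le_one (hs N).le
    have h3 : 0 ≤ d N / c N := div_nonneg (hd N) (hc N).le
    have h4 : 0 ≤ σ N := (hs N).le
    have hB : B N = πbar * (|C| * |ε N|) * (R + R ^ 2 * (1 / σ N)) + πbar * (1 / σ N)
      + R ^ 2 * (σ N * (c N / ρ N)) + R * (c N / ρ N)
      + (d N / c N) * (σ N * (c N / ρ N) + R * (c N / ρ N)) := rfl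
    rw [hB]
    have e1 : 0 ≤ πbar * (|C| * |ε N|) * (R + R ^ 2 * (1 / σ N)) :=
      mul_nonneg (mul_nonneg hπpos.le (mul_nonneg (abs_nonneg _) (abs_nonneg _)))
        (add_nonneg hR0 (mul_nonneg (by positivity) h2))
    have e2 : 0 ≤ πbar * (1 / σ N) := mul_nonneg hπpos.le h2
    have e3 : 0 ≤ R ^ 2 * (σ N * (c N / ρ N)) :=
      mul_nonneg (by positivity) (mul_nonneg h4 h1)
    have e4 : 0 ≤ R * (c N / ρ N) := mul_nonneg hR0 h1
    have e5 : 0 ≤ (d N / c N) * (σ N * (c N / ρ N) + R * (c N / ρ N)) :=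
      mul_nonneg h3 (add_nonneg (mul_nonneg h4 h1) (mul_nonneg hR0 h1))
    linarith
  -- limits
  have hcρ : Tendsto (fun N => c N / ρ N) atTop (nhds 0) := by
    refine hρc.inv_tendsto_atTop.congr fun N => ?_
    simp [Pi.inv_apply, inv_div]
  have sqrt0 : Tendsto Real.sqrt (nhds 0) (nhds 0) := by
    simpa using Real.continuous_sqrt.tendsto 0
  have hμtop : Tendsto μ atTop atTop := by
    refine (hρc.const_mul_atTop hπpos).congr fun N => ?_
    rw [hμ, mul_div_assoc]
  have hinvσ : Tendsto (fun N => 1 / σ N) atTop (nhds 0) := by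
    have h2 := sqrt0.comp hμtop.inv_tendsto_atTop
    refine h2.congr fun N => ?_
    simp only [Function.comp_apply, Pi.inv_apply, Real.sqrt_inv, hσ, one_div]
  have hsc : ∀ N, σ N * (c N / ρ N) = Real.sqrt (πbar * (c N / ρ N)) := by
    intro N
    rw [hσ, show πbar * (c N / ρ N) = μ N * (c N / ρ N) ^ 2 by
        rw [hμ]; field_simp [(hρ N).ne', (hc N).ne'],
      Real.sqrt_mul (hm N).le, Real.sqrt_sq (div_nonneg (hc N).le (hρ N).le)]
  have hscρ : Tendsto (fun N => σ N * (c N / ρ N)) atTop (nhds 0) := by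
    have h1 : Tendsto (fun N => πbar * (c N / ρ N)) atTop (nhds 0) := by
      simpa using tendsto_const_nhds.mul hcρ
    exact (sqrt0.comp h1).congr fun N => (hsc N).symm
  have hεabs : Tendsto (fun N => |ε N|) atTop (nhds 0) := by
    simpa using hε.abs
  have hBlim : Tendsto B atTop (nhds 0) := by
    have t1 : Tendsto (fun N => πbar * (|C| * |ε N|) * (R + R ^ 2 * (1 / σ N)))
        atTop (nhds 0) := by
      simpa using (tendsto_const_nhds.mul (tendsto_const_nhds.mul hεabs)).mul
        ((tendsto_const_nhds (x := R)).add (tendsto_const_nhds.mul hinvσ))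
    have t2 : Tendsto (fun N => πbar * (1 / σ N)) atTop (nhds 0) := by
      simpa using (tendsto_const_nhds (x := πbar)).mul hinvσ
    have t3 : Tendsto (fun N => R ^ 2 * (σ N * (c N / ρ N))) atTop (nhds 0) := by
      simpa using (tendsto_const_nhds (x := R ^ 2)).mul hscρ
    have t4 : Tendsto (fun N => R * (c N / ρ N)) atTop (nhds 0) := by
      simpa using (tendsto_const_nhds (x := R)).mul hcρ
    have t5 : Tendsto (fun N => (d N / c N) * (σ N * (c N / ρ N) + R * (c N / ρ N)))
        atTop (nhds 0) := by
      simpa using hdc.mul (hscρ.add (tendsto_const_nhds.mul hcρ))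
    rw [hBdef]
    simpa using ((((t1.add t2).add t3).add t4).add t5)
  -- key pointwise bound
  have key : ∀ N, ∀ y ∈ ((fun k : ℕ =>
        |(1 / σ N) * (πbar * h N k * (k : ℝ)
            - (ρ N)⁻¹ * (d N * (k : ℝ) + c N * (k : ℝ) * ((k : ℝ) - 1)))
          + πbar * (((k : ℝ) - μ N) / σ N)|)
        '' {k : ℕ | 1 ≤ k ∧ ((k : ℝ) - μ N) / σ N ∈ K}), y ≤ B N := by
    intro N y hy
    obtain ⟨k, ⟨hk1, hkK⟩, rfl⟩ := hy
    show |(1 / σ N) * (πbar * h N k * (k : ℝ)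
        - (ρ N)⁻¹ * (d N * (k : ℝ) + c N * (k : ℝ) * ((k : ℝ) - 1)))
        + πbar * (((k : ℝ) - μ N) / σ N)| ≤ B N
    have hsN := hs N
    have hmN := hm N
    have hssN := hss N
    obtain ⟨x, hx⟩ : ∃ x : ℝ, x = ((k : ℝ) - μ N) / σ N := ⟨_, rfl⟩
    have hxR : |x| ≤ R := hRK x (by rw [hx]; exact hkK)
    have hπb' : πbar = σ N * σ N * c N / ρ N := by
      rw [hssN, hμ]; field_simp [(hρ N).ne', (hc N).ne']
    have hk' : (k : ℝ) = μ N + x * σ N := by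
      rw [hx]; field_simp; ring
    have hid : (1 / σ N) * (πbar * h N k * (k : ℝ)
            - (ρ N)⁻¹ * (d N * (k : ℝ) + c N * (k : ℝ) * ((k : ℝ) - 1)))
          + πbar * (((k : ℝ) - μ N) / σ N)
        = πbar * (h N k - 1) * (k : ℝ) / σ N + πbar / σ N
            - x ^ 2 * (σ N * (c N / ρ N)) + x * (c N / ρ N)
            - (d N / ρ N) * (σ N + x) := by
      rw [hx, hπb', ← hssN]
      exact drift_id_aux (σ N) (c N) (ρ N) (d N) (h N k) (k : ℝ) hsN.ne' (hρ N).ne'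
    have hxe : |x| = |(k : ℝ) - μ N| / σ N := by
      rw [hx, abs_div, abs_of_pos hsN]
    have hfrac : |(k : ℝ) - μ N| / μ N = |x| / σ N := by
      rw [hxe, ← hssN, div_div]
    have h1 : |h N k - 1| ≤ |C| * |ε N| * (|x| / σ N) := by
      calc |h N k - 1| ≤ C * ε N * |(k : ℝ) - μ N| / μ N := hεbd N k
        _ = C * ε N * (|(k : ℝ) - μ N| / μ N) := by ring
        _ ≤ |C * ε N| * (|(k : ℝ) - μ N| / μ N) :=
            mul_le_mul_of_nonneg_right (le_abs_self _)
              (div_nonneg (abs_nonneg _) hmN.le)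
        _ = |C| * |ε N| * (|x| / σ N) := by rw [abs_mul, hfrac]
    have hkb : (k : ℝ) ≤ σ N * (σ N + |x|) := by
      have hk2 : (k : ℝ) = σ N * σ N + x * σ N := by rw [hk', ← hssN]
      nlinarith [le_abs_self x, hsN]
    have hT1 : |πbar * (h N k - 1) * (k : ℝ) / σ N|
        ≤ πbar * (|C| * |ε N|) * (R + R ^ 2 * (1 / σ N)) := by
      rw [abs_div, abs_mul, abs_mul, abs_of_pos hπpos, Nat.abs_cast, abs_of_pos hsN]
      calc πbar * |h N k - 1| * (k : ℝ) / σ N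
          ≤ πbar * (|C| * |ε N| * (|x| / σ N)) * (σ N * (σ N + |x|)) / σ N := by
            gcongr
        _ = πbar * (|C| * |ε N|) * (|x| + |x| * |x| * (1 / σ N)) := by
            field_simp
        _ ≤ πbar * (|C| * |ε N|) * (R + R ^ 2 * (1 / σ N)) := by
            have h1s : (0 : ℝ) ≤ 1 / σ N := div_nonneg zero_le_one hsN.le
            have hxx : |x| * |x| ≤ R ^ 2 := by nlinarith [abs_nonneg x]
            gcongr
    have hT3 : x ^ 2 * (σ N * (c N / ρ N)) ≤ R ^ 2 * (σ N * (c N / ρ N)) := by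
      have hx2 : x ^ 2 ≤ R ^ 2 := by nlinarith [le_abs_self x, neg_abs_le x, abs_nonneg x]
      have hnn : (0 : ℝ) ≤ σ N * (c N / ρ N) :=
        mul_nonneg hsN.le (div_nonneg (hc N).le (hρ N).le)
      exact mul_le_mul_of_nonneg_right hx2 hnn
    have hT4 : |x * (c N / ρ N)| ≤ R * (c N / ρ N) := by
      rw [abs_mul, abs_of_pos (div_pos (hc N) (hρ N))]
      exact mul_le_mul_of_nonneg_right hxR (div_pos (hc N) (hρ N)).le
    have hT5 : |(d N / ρ N) * (σ N + x)|
        ≤ (d N / c N) * (σ N * (c N / ρ N) + R * (c N / ρ N)) := by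
      have heq : (d N / c N) * (σ N * (c N / ρ N) + R * (c N / ρ N))
          = (d N / ρ N) * (σ N + R) := by
        field_simp [(hρ N).ne', (hc N).ne']
      rw [heq, abs_mul, abs_of_nonneg (div_nonneg (hd N) (hρ N).le)]
      have h5 : |σ N + x| ≤ σ N + R := (abs_add_le _ _).trans (by
        rw [abs_of_pos hsN]; linarith)
      exact mul_le_mul_of_nonneg_left h5 (div_nonneg (hd N) (hρ N).le)
    rw [hid]
    have habs : ∀ a b c' d' e' : ℝ, 0 ≤ b → 0 ≤ c' →
        |a + b - c' + d' - e'| ≤ |a| + b + c' + |d'| + |e'| := by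
      intro a b c' d' e' hb hc'
      have g1 := le_abs_self a; have g1' := neg_abs_le a
      have g4 := le_abs_self d'; have g4' := neg_abs_le d'
      have g5 := le_abs_self e'; have g5' := neg_abs_le e'
      exact abs_le.mpr ⟨by linarith, by linarith⟩
    have hT2nn : 0 ≤ πbar / σ N := div_nonneg hπpos.le hsN.le
    have hT3nn : 0 ≤ x ^ 2 * (σ N * (c N / ρ N)) :=
      mul_nonneg (sq_nonneg x) (mul_nonneg hsN.le (div_nonneg (hc N).le (hρ N).le))
    have hBN : B N = πbar * (|C| * |ε N|) * (R + R ^ 2 * (1 / σ N)) + πbar * (1 / σ N)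
      + R ^ 2 * (σ N * (c N / ρ N)) + R * (c N / ρ N)
      + (d N / c N) * (σ N * (c N / ρ N) + R * (c N / ρ N)) := rfl
    have hT2eq : πbar / σ N = πbar * (1 / σ N) := by rw [mul_one_div]
    calc |πbar * (h N k - 1) * (k : ℝ) / σ N + πbar / σ N
            - x ^ 2 * (σ N * (c N / ρ N)) + x * (c N / ρ N)
            - (d N / ρ N) * (σ N + x)|
        ≤ |πbar * (h N k - 1) * (k : ℝ) / σ N| + πbar / σ N
            + x ^ 2 * (σ N * (c N / ρ N)) + |x * (c N / ρ N)|
            + |(d N / ρ N) * (σ N + x)| := habs _ _ _ _ _ hT2nn hT3nn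
      _ ≤ B N := by rw [hBN]; linarith
  -- squeeze
  refine tendsto_of_tendsto_of_tendsto_of_le_of_le tendsto_const_nhds hBlim
    (fun N => Real.sSup_nonneg ?_) (fun N => Real.sSup_le (key N) (hBnn N))
  rintro y ⟨k, -, rfl⟩
  exact abs_nonneg _
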